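/- Let r ≥ 2 and let a_1 ≤ a_2 ≤ … ≤ a_r and s_1 ≤ s_2 ≤ … ≤ s_r be positive integers with a_1 < s_1 and s_i ≤ a_{i+1} for every 1 ≤ i ≤ r-1. Then there exist constants c₁, c₂ > 0 and n₀ such that for all n ≥ n₀: c₁·n^{a_2 + a_3 + … + a_r} ≤ ex(n, K_{a_1,…,a_r}, K_{s_1,…,s_r}) ≤ c₂·n^{a_2 + a_3 + … + a_r}. -/

import Mathlib

open SimpleGraph

/-- `F` is contained in `G` as a subgraph, i.e. there is an injective graph
homomorphism from `F` to `G`. -/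
def ContainsCopy {α β : Type*} (F : SimpleGraph α) (G : SimpleGraph β) : Prop :=
  ∃ f : F →g G, Function.Injective f

/-- `N(H,G)`: the number of subgraphs of `G` isomorphic to `H`. -/
noncomputable def copyCount {α β : Type*} (H : SimpleGraph α) (G : SimpleGraph β) : ℕ :=
  Nat.card {G' : G.Subgraph // Nonempty (H ≃g G'.coe)}

/-- `ex(n,H,F)`: the maximum number of copies of `H` in an `F`-free graph on `n` vertices. -/
noncomputable def exGen (n : ℕ) {α β : Type*} (H : SimpleGraph α) (F : SimpleGraph β) : ℕ :=
  sSup {m | ∃ G : SimpleGraph (Fin n), ¬ ContainsCopy F G ∧ m = copyCount H G}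

/-- The complete bipartite graph `K_{a,b}`. -/
abbrev Kbip (a b : ℕ) : SimpleGraph (Fin a ⊕ Fin b) := completeBipartiteGraph (Fin a) (Fin b)

/-- `K̄_{a,b}`: obtained from `K_{a,b}` by adding all edges inside the part of size `a`. -/
def KbipBar (a b : ℕ) : SimpleGraph (Fin a ⊕ Fin b) :=
  SimpleGraph.fromRel (fun u _ => u.isLeft)

/-- `k` vertex-disjoint copies of `G`. -/
def disjCopies (k : ℕ) {α : Type*} (G : SimpleGraph α) : SimpleGraph (Fin k × α) :=
  SimpleGraph.fromRel (fun u v => u.1 = v.1 ∧ G.Adj u.2 v.2)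

/-- The vertex-disjoint union of `G` and `H`. -/
def disjSum {α β : Type*} (G : SimpleGraph α) (H : SimpleGraph β) : SimpleGraph (α ⊕ β) :=
  SimpleGraph.fromRel (fun u v =>
    (∃ x y, u = Sum.inl x ∧ v = Sum.inl y ∧ G.Adj x y) ∨
    (∃ x y, u = Sum.inr x ∧ v = Sum.inr y ∧ H.Adj x y))

/-- Placing a graph `G0` on the `Fin b`-part of the vertex set `Fin a ⊕ Fin b`. -/
def liftRight (a : ℕ) {b : ℕ} (G0 : SimpleGraph (Fin b)) : SimpleGraph (Fin a ⊕ Fin b) :=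
  SimpleGraph.fromRel (fun u v => ∃ x y, u = Sum.inr x ∧ v = Sum.inr y ∧ G0.Adj x y)


set_option linter.unusedSectionVars false
set_option maxHeartbeats 1600000

section Basics

variable {α β : Type*} (H : SimpleGraph α) (F : SimpleGraph β)

lemma subgraph_inj {n : ℕ} (G : SimpleGraph (Fin n)) :
    Function.Injective (fun G' : G.Subgraph => (G'.verts, G'.Adj)) := by
  intro G1 G2 h
  simp only [Prod.mk.injEq] at h
  exact SimpleGraph.Subgraph.ext h.1 h.2

lemma copyCount_le_B {n : ℕ} (G : SimpleGraph (Fin n)) :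
    copyCount H G ≤ Nat.card (Set (Fin n) × (Fin n → Fin n → Prop)) := by
  classical
  exact Nat.card_le_card_of_injective
    (fun G' : {G' : G.Subgraph // Nonempty (H ≃g G'.coe)} => ((G' : G.Subgraph).verts, (G' : G.Subgraph).Adj))
    ((subgraph_inj G).comp Subtype.val_injective)

lemma exSet_bddAbove (n : ℕ) :
    BddAbove {m | ∃ G : SimpleGraph (Fin n), ¬ ContainsCopy F G ∧ m = copyCount H G} := by
  refine ⟨Nat.card (Set (Fin n) × (Fin n → Fin n → Prop)), ?_⟩
  rintro m ⟨G, -, rfl⟩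
  exact copyCount_le_B H G

lemma le_exGen {n : ℕ} {G : SimpleGraph (Fin n)} (h : ¬ ContainsCopy F G) :
    copyCount H G ≤ exGen n H F :=
  le_csSup (exSet_bddAbove H F n) ⟨G, h, rfl⟩

lemma bot_free (hF : ∃ u v : β, F.Adj u v) : ¬ ContainsCopy F (⊥ : SimpleGraph (Fin 0)) := by
  rintro ⟨f, -⟩
  obtain ⟨u, v, huv⟩ := hF
  exact (f.map_adj huv).elim

lemma bot_free' (n : ℕ) (hF : ∃ u v : β, F.Adj u v) :
    ¬ ContainsCopy F (⊥ : SimpleGraph (Fin n)) := by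
  rintro ⟨f, -⟩
  obtain ⟨u, v, huv⟩ := hF
  exact (f.map_adj huv).elim

lemma exGen_le {n : ℕ} {B : ℕ} (hF : ∃ u v : β, F.Adj u v)
    (h : ∀ G : SimpleGraph (Fin n), ¬ ContainsCopy F G → copyCount H G ≤ B) :
    exGen n H F ≤ B := by
  refine csSup_le ⟨copyCount H (⊥ : SimpleGraph (Fin n)), ⟨⊥, bot_free' F n hF, rfl⟩⟩ ?_
  rintro m ⟨G, hG, rfl⟩
  exact h G hG

end Basics

section CountHoms

variable {α : Type*} [Finite α] {n : ℕ} (H : SimpleGraph α) (G : SimpleGraph (Fin n))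

/-- From an isomorphism of `H` with a subgraph's coercion, get the vertex map into `Fin n`. -/
private def isoMap (G' : G.Subgraph) (e : H ≃g G'.coe) : α → Fin n := fun v => (e v : Fin n)

lemma isoMap_inj (G' : G.Subgraph) (e : H ≃g G'.coe) : Function.Injective (isoMap H G G' e) :=
  Subtype.val_injective.comp (e.toEquiv.injective)

lemma isoMap_verts (G' : G.Subgraph) (e : H ≃g G'.coe) :
    G'.verts = Set.range (isoMap H G G' e) := by
  ext x
  constructor
  · intro hx
    exact ⟨e.symm ⟨x, hx⟩, by simp [isoMap]⟩
  · rintro ⟨u, rfl⟩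
    exact (e u).2

lemma isoMap_adj (G' : G.Subgraph) (e : H ≃g G'.coe) (x y : Fin n) :
    G'.Adj x y ↔ ∃ u v, H.Adj u v ∧ isoMap H G G' e u = x ∧ isoMap H G G' e v = y := by
  constructor
  · intro hxy
    have hx : x ∈ G'.verts := G'.edge_vert hxy
    have hy : y ∈ G'.verts := G'.edge_vert hxy.symm
    refine ⟨e.symm ⟨x, hx⟩, e.symm ⟨y, hy⟩, ?_, by simp [isoMap], by simp [isoMap]⟩
    rw [e.symm.map_adj_iff]
    exact hxy
  · rintro ⟨u, v, huv, rfl, rfl⟩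
    exact (e.map_adj_iff.mpr huv : G'.coe.Adj (e u) (e v))

lemma copyCount_le_injHoms :
    copyCount H G ≤ Nat.card {f : α → Fin n //
      Function.Injective f ∧ ∀ u v, H.Adj u v → G.Adj (f u) (f v)} := by
  classical
  have : ∀ p : {G' : G.Subgraph // Nonempty (H ≃g G'.coe)},
      Nonempty (H ≃g (p : G.Subgraph).coe) := fun p => p.2
  set Φ : {G' : G.Subgraph // Nonempty (H ≃g G'.coe)} →
      {f : α → Fin n // Function.Injective f ∧ ∀ u v, H.Adj u v → G.Adj (f u) (f v)} :=
    fun p => ⟨isoMap H G p (Classical.choice p.2),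
      isoMap_inj H G p (Classical.choice p.2),
      fun u v huv => (p : G.Subgraph).adj_sub
        ((isoMap_adj H G p (Classical.choice p.2) _ _).mpr ⟨u, v, huv, rfl, rfl⟩)⟩ with hΦ
  have hinj : Function.Injective Φ := by
    intro p q h
    have hf : isoMap H G p (Classical.choice p.2) = isoMap H G q (Classical.choice q.2) := by
      simpa [hΦ] using congrArg Subtype.val h
    apply Subtype.ext
    apply SimpleGraph.Subgraph.ext
    · rw [isoMap_verts H G p (Classical.choice p.2), isoMap_verts H G q (Classical.choice q.2), hf]
    · ext x y
      rw [isoMap_adj H G p (Classical.choice p.2), isoMap_adj H G q (Classical.choice q.2), hf]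
  exact Nat.card_le_card_of_injective Φ hinj

end CountHoms

section Upper

variable {r : ℕ} (hr : 2 ≤ r) (a s : Fin r → ℕ)

/-- The vertices of `K_{a₁,…,a_r}` outside the first part. -/
abbrev Rst (r : ℕ) (a : Fin r → ℕ) : Type := {p : Σ i : Fin r, Fin (a i) // p.1.val ≠ 0}

lemma ks_of_commonNbhd {n : ℕ} (G : SimpleGraph (Fin n))
    (hconsec : ∀ i : Fin r, ∀ h : i.val + 1 < r, s i ≤ a ⟨i.val + 1, h⟩)
    (g : Rst r a → Fin n) (hginj : Function.Injective g)
    (hgadj : ∀ p q : Rst r a, p.1.1.val ≠ q.1.1.val → G.Adj (g p) (g q))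
    (N : Finset (Fin n)) (hN : ∀ v ∈ N, ∀ p : Rst r a, G.Adj v (g p))
    (hNcard : s ⟨r - 1, by omega⟩ ≤ N.card) :
    ContainsCopy (completeMultipartiteGraph (fun i => Fin (s i))) G := by
  classical
  have hr0 : 0 < r := by omega
  -- value of s at the last index bounds each branchless index
  have hlast : ∀ i : Fin r, ¬ (i.val + 1 < r) → s i ≤ N.card := by
    intro i hi
    have : i = ⟨r - 1, by omega⟩ := Fin.ext (by have := i.isLt; simp; omega)
    rw [this]; exact hNcard
  set φ : (Σ i : Fin r, Fin (s i)) → Fin n := fun p =>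
    if h : p.1.val + 1 < r then
      g ⟨⟨⟨p.1.val + 1, h⟩, ⟨p.2.val, lt_of_lt_of_le p.2.isLt (hconsec p.1 h)⟩⟩, by simp⟩
    else
      ↑(N.equivFin.symm ⟨p.2.val, lt_of_lt_of_le p.2.isLt (hlast p.1 h)⟩) with hφ
  have hmemN : ∀ (i : Fin r) (y : Fin (s i)) (h : ¬ (i.val + 1 < r)), φ ⟨i, y⟩ ∈ N := by
    intro i y h
    simp only [hφ, dif_neg h]
    exact (N.equivFin.symm _).2
  have hadj : ∀ u v : (Σ i : Fin r, Fin (s i)), u.1 ≠ v.1 → G.Adj (φ u) (φ v) := by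
    rintro ⟨i, y⟩ ⟨j, z⟩ hij
    have hij' : i.val ≠ j.val := fun h => hij (Fin.ext h)
    by_cases hi : i.val + 1 < r <;> by_cases hj : j.val + 1 < r
    · simp only [hφ, dif_pos hi, dif_pos hj]
      exact hgadj _ _ (by simpa using fun h => hij' (by omega))
    · have := hN _ (hmemN j z hj) ⟨⟨⟨i.val + 1, hi⟩, ⟨y.val, lt_of_lt_of_le y.isLt (hconsec i hi)⟩⟩, by simp⟩
      have h2 : G.Adj (φ ⟨j, z⟩) (φ ⟨i, y⟩) := by
        simpa only [hφ, dif_pos hi, dif_neg hj] using this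
      exact h2.symm
    · have := hN _ (hmemN i y hi) ⟨⟨⟨j.val + 1, hj⟩, ⟨z.val, lt_of_lt_of_le z.isLt (hconsec j hj)⟩⟩, by simp⟩
      simpa only [hφ, dif_pos hj, dif_neg hi] using this
    · exact absurd (by omega : i.val = j.val) hij'
  have hinj : Function.Injective φ := by
    rintro ⟨i, y⟩ ⟨j, z⟩ h
    by_cases hi : i.val + 1 < r <;> by_cases hj : j.val + 1 < r
    · simp only [hφ, dif_pos hi, dif_pos hj] at h
      have h2 := hginj h
      have hfst : i.val + 1 = j.val + 1 := congrArg (fun p : Rst r a => p.1.1.val) h2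
      have hsnd : y.val = z.val := congrArg (fun p : Rst r a => p.1.2.val) h2
      have hij : i = j := Fin.ext (by omega)
      subst hij
      have : y = z := Fin.ext hsnd
      rw [this]
    · exfalso
      have hmem := hmemN j z hj
      rw [← h] at hmem
      have := hN _ hmem ⟨⟨⟨i.val + 1, hi⟩, ⟨y.val, lt_of_lt_of_le y.isLt (hconsec i hi)⟩⟩, by simp⟩
      simp only [hφ, dif_pos hi] at this ⊢
      exact this.ne rfl
    · exfalso
      have hmem := hmemN i y hi
      rw [h] at hmem
      have := hN _ hmem ⟨⟨⟨j.val + 1, hj⟩, ⟨z.val, lt_of_lt_of_le z.isLt (hconsec j hj)⟩⟩, by simp⟩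
      simp only [hφ, dif_pos hj] at this ⊢
      exact this.ne rfl
    · have hij : i = j := Fin.ext (by omega)
      subst hij
      simp only [hφ, dif_neg hi] at h
      have h2 := N.equivFin.symm.injective (Subtype.val_injective h)
      rw [Fin.mk.injEq] at h2
      have : y = z := Fin.ext h2
      rw [this]
  exact ⟨⟨φ, fun huv => hadj _ _ huv⟩, hinj⟩


/-- Compress a small finset into `Fin K`. -/
noncomputable def emb {n : ℕ} (K : ℕ) (hK : 0 < K) (t : Finset (Fin n)) : Fin n → Fin K :=
  fun v => if h : t.card ≤ K ∧ v ∈ t then Fin.castLE h.1 (t.equivFin ⟨v, h.2⟩) else ⟨0, hK⟩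

lemma emb_injOn {n : ℕ} (K : ℕ) (hK : 0 < K) (t : Finset (Fin n)) (hc : t.card ≤ K)
    {v w : Fin n} (hv : v ∈ t) (hw : w ∈ t) (h : emb K hK t v = emb K hK t w) : v = w := by
  simp only [emb, dif_pos (And.intro hc hv), dif_pos (And.intro hc hw)] at h
  have h2 := t.equivFin.injective (Fin.castLE_injective hc h)
  exact congrArg Subtype.val h2

open Classical in
noncomputable def NF {n : ℕ} (G : SimpleGraph (Fin n)) (g : Rst r a → Fin n) : Finset (Fin n) :=
  Finset.univ.filter (fun v => ∀ p : Rst r a, G.Adj v (g p))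

lemma mem_NF {n : ℕ} (G : SimpleGraph (Fin n)) (g : Rst r a → Fin n) (v : Fin n) :
    v ∈ NF a G g ↔ ∀ p : Rst r a, G.Adj v (g p) := by
  simp [NF]

lemma card_Rst (hr0 : 0 < r) : Nat.card (Rst r a) = (∑ i, a i) - a ⟨0, hr0⟩ := by
  classical
  rw [Nat.card_eq_fintype_card]
  have e : {p : Σ i : Fin r, Fin (a i) // p.1.val = 0} ≃ Fin (a ⟨0, hr0⟩) := by
    refine ⟨fun p => ⟨p.1.2.val, ?_⟩, fun x => ⟨⟨⟨0, hr0⟩, x⟩, rfl⟩, ?_, ?_⟩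
    · have : p.1.1 = ⟨0, hr0⟩ := Fin.ext p.2
      rw [← this]; exact p.1.2.isLt
    · rintro ⟨⟨i, x⟩, h⟩
      have : i = ⟨0, hr0⟩ := Fin.ext h
      subst this
      rfl
    · intro x; rfl
  have h1 : Fintype.card {p : Σ i : Fin r, Fin (a i) // p.1.val = 0} = a ⟨0, hr0⟩ := by
    rw [Fintype.card_congr e, Fintype.card_fin]
  have h2 : Fintype.card (Σ i : Fin r, Fin (a i)) = ∑ i, a i := by
    simp
  calc Fintype.card (Rst r a)
      = Fintype.card (Σ i : Fin r, Fin (a i)) -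
        Fintype.card {p : Σ i : Fin r, Fin (a i) // p.1.val = 0} :=
        Fintype.card_subtype_compl _
    _ = (∑ i, a i) - a ⟨0, hr0⟩ := by rw [h1, h2]

lemma injHoms_card_le (hr : 2 ≤ r) {n : ℕ} (G : SimpleGraph (Fin n))
    (hconsec : ∀ i : Fin r, ∀ h : i.val + 1 < r, s i ≤ a ⟨i.val + 1, h⟩)
    (hspos : ∀ i, 0 < s i)
    (hfree : ¬ ContainsCopy (completeMultipartiteGraph (fun i => Fin (s i))) G) :
    Nat.card {f : (Σ i : Fin r, Fin (a i)) → Fin n // Function.Injective f ∧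
        ∀ u v, (completeMultipartiteGraph (fun i => Fin (a i))).Adj u v → G.Adj (f u) (f v)} ≤
      (s ⟨r - 1, by omega⟩) ^ (a ⟨0, Nat.lt_of_lt_of_le Nat.two_pos hr⟩) * n ^ ((∑ i, a i) - a ⟨0, Nat.lt_of_lt_of_le Nat.two_pos hr⟩) := by
  classical
  have hr0 : 0 < r := by omega
  set K := s ⟨r - 1, by omega⟩ with hKdef
  have hK : 0 < K := hspos _
  -- the common neighborhood of any valid partial system is small
  have hsmall : ∀ f : {f : (Σ i : Fin r, Fin (a i)) → Fin n // Function.Injective f ∧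
      ∀ u v, (completeMultipartiteGraph (fun i => Fin (a i))).Adj u v → G.Adj (f u) (f v)},
      (NF a G (fun p => f.1 p.1)).card ≤ K := by
    intro f
    by_contra hcon
    push_neg at hcon
    have hgadj : ∀ p q : Rst r a, p.1.1.val ≠ q.1.1.val → G.Adj (f.1 p.1) (f.1 q.1) := by
      intro p q hpq
      refine f.2.2 _ _ ?_
      show p.1.1 ≠ q.1.1
      exact fun h => hpq (congrArg Fin.val h)
    refine hfree (ks_of_commonNbhd hr a s G hconsec (fun p => f.1 p.1)
      (fun p q hpq => Subtype.val_injective (f.2.1 hpq))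
      hgadj (NF a G (fun p => f.1 p.1)) ?_ ?_)
    · intro v hv p
      exact (mem_NF a G _ v).mp hv p
    · omega
  set Ψ : {f : (Σ i : Fin r, Fin (a i)) → Fin n // Function.Injective f ∧
      ∀ u v, (completeMultipartiteGraph (fun i => Fin (a i))).Adj u v → G.Adj (f u) (f v)} →
      (Fin (a ⟨0, hr0⟩) → Fin K) × (Rst r a → Fin n) :=
    fun f => (fun x => emb K hK (NF a G (fun p => f.1 p.1)) (f.1 ⟨⟨0, hr0⟩, x⟩),
      fun p => f.1 p.1) with hΨ
  have hmem : ∀ (f : {f : (Σ i : Fin r, Fin (a i)) → Fin n // Function.Injective f ∧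
      ∀ u v, (completeMultipartiteGraph (fun i => Fin (a i))).Adj u v → G.Adj (f u) (f v)})
      (x : Fin (a ⟨0, hr0⟩)), f.1 ⟨⟨0, hr0⟩, x⟩ ∈ NF a G (fun p => f.1 p.1) := by
    intro f x
    refine (mem_NF a G _ _).mpr (fun p => ?_)
    refine f.2.2 _ _ ?_
    show (⟨0, hr0⟩ : Fin r) ≠ p.1.1
    exact fun h => p.2 (congrArg Fin.val h.symm)
  have hinj : Function.Injective Ψ := by
    intro f1 f2 h
    have hg : (fun p : Rst r a => f1.1 p.1) = (fun p : Rst r a => f2.1 p.1) :=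
      congrArg Prod.snd h
    have h1 := congrArg Prod.fst h
    simp only [hΨ] at h1
    apply Subtype.ext
    funext u
    by_cases hu : u.1.val = 0
    · obtain ⟨i, x⟩ := u
      have : i = ⟨0, hr0⟩ := Fin.ext hu
      subst this
      have h1x := congrFun h1 x
      rw [← hg] at h1x
      exact emb_injOn K hK _ (hsmall f1) (hmem f1 x) (by rw [hg]; exact hmem f2 x) h1x
    · exact congrFun hg ⟨u, hu⟩
  calc Nat.card _ ≤ Nat.card ((Fin (a ⟨0, hr0⟩) → Fin K) × (Rst r a → Fin n)) :=
        Nat.card_le_card_of_injective Ψ hinj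
    _ = K ^ (a ⟨0, hr0⟩) * n ^ ((∑ i, a i) - a ⟨0, hr0⟩) := by
        rw [Nat.card_prod, Nat.card_fun, Nat.card_fun, ← card_Rst a hr0]
        simp

end Upper

section Lower

variable {r : ℕ} (hr : 2 ≤ r)

/-- Complete multipartite graph on `Fin n` induced by a partial coloring. -/
def colGraph {n : ℕ} (col : Fin n → Option (Fin r)) : SimpleGraph (Fin n) where
  Adj u v := ∃ cu cv, col u = some cu ∧ col v = some cv ∧ cu ≠ cv
  symm := by
    constructor
    rintro u v ⟨cu, cv, h1, h2, h3⟩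
    exact ⟨cv, cu, h2, h1, h3.symm⟩
  loopless := by
    constructor
    rintro u ⟨cu, cv, h1, h2, h3⟩
    rw [h1] at h2
    exact h3 (Option.some_injective _ h2)

variable (s : Fin r → ℕ)

/-- The color class of `j`. -/
def classF {n : ℕ} (col : Fin n → Option (Fin r)) (j : Fin r) : Finset (Fin n) :=
  Finset.univ.filter (fun v => col v = some j)

lemma mem_classF {n : ℕ} (col : Fin n → Option (Fin r)) (j : Fin r) (v : Fin n) :
    v ∈ classF col j ↔ col v = some j := by
  simp [classF]

lemma colGraph_free {n : ℕ} (col : Fin n → Option (Fin r))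
    (hspos : ∀ i, 0 < s i) (hsmono : Monotone s)
    (h0 : (classF col ⟨0, Nat.lt_of_lt_of_le Nat.two_pos hr⟩).card < s ⟨0, Nat.lt_of_lt_of_le Nat.two_pos hr⟩) :
    ¬ ContainsCopy (completeMultipartiteGraph (fun i => Fin (s i))) (colGraph col) := by
  classical
  have hr0 : 0 < r := by omega
  rintro ⟨φ, hφinj⟩
  -- every image vertex is colored, with color function `colf`
  have colored : ∀ w : Σ i : Fin r, Fin (s i), ∃ j : Fin r, col (φ w) = some j := by
    intro w
    have key : ∀ j0 : Fin r, w.1 ≠ j0 → ∃ j : Fin r, col (φ w) = some j := by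
      intro j0 hne
      have hadj : (completeMultipartiteGraph (fun i => Fin (s i))).Adj w ⟨j0, ⟨0, hspos j0⟩⟩ := hne
      obtain ⟨cu, cv, h1, h2, h3⟩ := φ.map_adj hadj
      exact ⟨cu, h1⟩
    by_cases hw : w.1.val = 0
    · refine key ⟨1, by omega⟩ (fun h => ?_)
      have : w.1.val = 1 := by rw [h]
      omega
    · refine key ⟨0, hr0⟩ (fun h => ?_)
      have : w.1.val = 0 := by rw [h]
      omega
  set colf : (Σ i : Fin r, Fin (s i)) → Fin r := fun w => (colored w).choose with hcolf
  have colf_spec : ∀ w, col (φ w) = some (colf w) := fun w => (colored w).choose_spec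
  have cross : ∀ w w' : Σ i : Fin r, Fin (s i), w.1 ≠ w'.1 → colf w ≠ colf w' := by
    intro w w' hne heq
    obtain ⟨cu, cv, h1, h2, h3⟩ := φ.map_adj (show (completeMultipartiteGraph
      (fun i => Fin (s i))).Adj w w' from hne)
    rw [colf_spec w] at h1
    rw [colf_spec w'] at h2
    exact h3 (by rw [← Option.some_injective _ h1, ← Option.some_injective _ h2, heq])
  by_cases hc : ∃ i : Fin r, ∀ x : Fin (s i), colf ⟨i, x⟩ = ⟨0, hr0⟩
  · obtain ⟨i, hi⟩ := hc
    set T : Finset (Fin n) := Finset.image (fun x : Fin (s i) => φ ⟨i, x⟩) Finset.univ with hT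
    have hsub : T ⊆ classF col ⟨0, hr0⟩ := by
      intro v hv
      rw [hT, Finset.mem_image] at hv
      obtain ⟨x, -, rfl⟩ := hv
      rw [mem_classF]
      rw [colf_spec ⟨i, x⟩, hi x]
    have hcard : T.card = s i := by
      rw [hT, Finset.card_image_of_injective _
        (fun x y hxy => sigma_mk_injective (hφinj hxy)), Finset.card_univ, Fintype.card_fin]
    have := Finset.card_le_card hsub
    rw [hcard] at this
    have hle : s ⟨0, hr0⟩ ≤ s i := hsmono (by simp [Fin.le_def])
    omega
  · push_neg at hc
    set χ : Fin r → Fin r := fun i => colf ⟨i, (hc i).choose⟩ with hχ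
    have hχinj : Function.Injective χ := by
      intro i j h
      by_contra hne
      exact cross _ _ (fun hh => hne hh) h
    have hχsurj := (Finite.injective_iff_surjective).mp hχinj
    obtain ⟨i, hi⟩ := hχsurj ⟨0, hr0⟩
    exact (hc i).choose_spec hi


variable (a : Fin r → ℕ)


lemma prod_choose_le_copyCount {n : ℕ} (col : Fin n → Option (Fin r)) :
    ∏ j, Nat.choose ((classF col j).card) (a j) ≤
      _root_.copyCount (completeMultipartiteGraph (fun i => Fin (a i))) (colGraph col) := by
  classical
  set G := colGraph col with hG
  set D := Π j : Fin r, {t : Finset (Fin n) // t ∈ (classF col j).powersetCard (a j)} with hD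
  have hcardD : Nat.card D = ∏ j, Nat.choose ((classF col j).card) (a j) := by
    rw [hD, Nat.card_pi]
    congr 1
    funext j
    rw [Nat.card_eq_fintype_card, Fintype.card_coe, Finset.card_powersetCard]
  rw [← hcardD]
  -- properties of a tuple
  have hTprop : ∀ (T : D) (j : Fin r), ((T j : Finset (Fin n)) ⊆ classF col j) ∧
      (T j : Finset (Fin n)).card = a j := fun T j => Finset.mem_powersetCard.mp (T j).2
  -- the vertex map of a tuple
  set φT : D → (Σ j : Fin r, Fin (a j)) → Fin n :=
    fun T p => ↑(((T p.1 : Finset (Fin n))).orderIsoOfFin (hTprop T p.1).2 p.2) with hφT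
  have hmemT : ∀ (T : D) (p : Σ j : Fin r, Fin (a j)), φT T p ∈ (T p.1 : Finset (Fin n)) :=
    fun T p => (((T p.1 : Finset (Fin n))).orderIsoOfFin (hTprop T p.1).2 p.2).2
  have hcol : ∀ (T : D) (p : Σ j : Fin r, Fin (a j)), col (φT T p) = some p.1 := by
    intro T p
    have := (hTprop T p.1).1 (hmemT T p)
    exact (Finset.mem_filter.mp this).2
  have hinjT : ∀ T : D, Function.Injective (φT T) := by
    rintro T ⟨i, x⟩ ⟨j, y⟩ h
    have hij : i = j := by
      have h1 := hcol T ⟨i, x⟩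
      rw [h, hcol T ⟨j, y⟩] at h1
      exact (Option.some_injective _ h1).symm
    subst hij
    have : x = y := ((T i : Finset (Fin n))).orderIsoOfFin (hTprop T i).2
      |>.injective (Subtype.val_injective h)
    rw [this]
  have hadjT : ∀ (T : D) (p q : Σ j : Fin r, Fin (a j)),
      G.Adj (φT T p) (φT T q) ↔ p.1 ≠ q.1 := by
    intro T p q
    constructor
    · rintro ⟨cu, cv, h1, h2, h3⟩
      rw [hcol T p] at h1
      rw [hcol T q] at h2
      rw [Option.some_injective _ h1, Option.some_injective _ h2]
      exact h3
    · intro hne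
      exact ⟨p.1, q.1, hcol T p, hcol T q, hne⟩
  -- the subgraph of a tuple
  set sub : D → G.Subgraph := fun T =>
    { verts := Set.range (φT T)
      Adj := fun u v => G.Adj u v ∧ u ∈ Set.range (φT T) ∧ v ∈ Set.range (φT T)
      adj_sub := fun h => h.1
      edge_vert := fun h => h.2.1
      symm := ⟨fun u v h => ⟨h.1.symm, h.2.2, h.2.1⟩⟩ } with hsub
  have hiso : ∀ T : D, Nonempty ((completeMultipartiteGraph (fun i => Fin (a i))) ≃g
      (sub T).coe) := by
    intro T
    refine ⟨⟨Equiv.ofInjective (φT T) (hinjT T), ?_⟩⟩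
    intro p q
    show (sub T).Adj (φT T p) (φT T q) ↔ p.1 ≠ q.1
    rw [hsub]
    simp only
    rw [hadjT T p q]
    simp [Set.mem_range]
  haveI : Finite G.Subgraph :=
    Finite.of_injective (fun G' : G.Subgraph => (G'.verts, G'.Adj))
      (fun G1 G2 h => by
        simp only [Prod.mk.injEq] at h
        exact SimpleGraph.Subgraph.ext h.1 h.2)
  set Θ : D → {G' : G.Subgraph // Nonempty ((completeMultipartiteGraph
      (fun i => Fin (a i))) ≃g G'.coe)} := fun T => ⟨sub T, hiso T⟩ with hΘ
  have hrange : ∀ (T : D) (j : Fin r) (v : Fin n),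
      v ∈ (T j : Finset (Fin n)) ↔ v ∈ Set.range (φT T) ∧ col v = some j := by
    intro T j v
    constructor
    · intro hv
      refine ⟨⟨⟨j, ((T j : Finset (Fin n)).orderIsoOfFin (hTprop T j).2).symm ⟨v, hv⟩⟩, ?_⟩,
        (Finset.mem_filter.mp ((hTprop T j).1 hv)).2⟩
      show ↑(((T j : Finset (Fin n))).orderIsoOfFin (hTprop T j).2
        ((((T j : Finset (Fin n))).orderIsoOfFin (hTprop T j).2).symm ⟨v, hv⟩)) = v
      simp
    · rintro ⟨⟨p, rfl⟩, hcv⟩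
      have : p.1 = j := by
        have := hcol T p
        rw [hcv] at this
        exact (Option.some_injective _ this).symm
      rw [← this]
      exact hmemT T p
  have hΘinj : Function.Injective Θ := by
    intro T1 T2 h
    have hv : Set.range (φT T1) = Set.range (φT T2) := by
      have h2 : (Θ T1 : G.Subgraph).verts = (Θ T2 : G.Subgraph).verts := by rw [h]
      simpa [hΘ, hsub] using h2
    funext j
    apply Subtype.ext
    apply Finset.ext
    intro v
    rw [hrange T1 j v, hrange T2 j v, hv]
  exact Nat.card_le_card_of_injective Θ hΘinj

end Lower

section Tail

variable {r : ℕ}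

/-- Colors for the template vertex set. -/
def colorOf (hr : 2 ≤ r) (a : Fin r → ℕ) {b : ℕ} :
    (Fin (a ⟨0, Nat.lt_of_lt_of_le Nat.two_pos hr⟩) ⊕ (Fin (r - 1) × Fin b)) → Fin r :=
  Sum.elim (fun _ => ⟨0, Nat.lt_of_lt_of_le Nat.two_pos hr⟩) (fun q => ⟨q.1.val + 1, by have := q.1.isLt; omega⟩)

/-- The coloring of `Fin n` obtained by pushing forward along an embedding. -/
noncomputable def colOf (hr : 2 ≤ r) (a : Fin r → ℕ) {n b : ℕ}
    (ψ : (Fin (a ⟨0, Nat.lt_of_lt_of_le Nat.two_pos hr⟩) ⊕ (Fin (r - 1) × Fin b)) ↪ Fin n) : Fin n → Option (Fin r) :=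
  fun v => if h : ∃ u, ψ u = v then some (colorOf hr a h.choose) else none

lemma colOf_spec (hr : 2 ≤ r) (a : Fin r → ℕ) {n b : ℕ}
    (ψ : (Fin (a ⟨0, Nat.lt_of_lt_of_le Nat.two_pos hr⟩) ⊕ (Fin (r - 1) × Fin b)) ↪ Fin n)
    (u : Fin (a ⟨0, Nat.lt_of_lt_of_le Nat.two_pos hr⟩) ⊕ (Fin (r - 1) × Fin b)) :
    colOf hr a ψ (ψ u) = some (colorOf hr a u) := by
  have hex : ∃ u', ψ u' = ψ u := ⟨u, rfl⟩
  rw [colOf, dif_pos hex]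
  congr 1
  exact congrArg _ (ψ.injective hex.choose_spec)

lemma colOf_inv (hr : 2 ≤ r) (a : Fin r → ℕ) {n b : ℕ}
    (ψ : (Fin (a ⟨0, Nat.lt_of_lt_of_le Nat.two_pos hr⟩) ⊕ (Fin (r - 1) × Fin b)) ↪ Fin n)
    {v : Fin n} {j : Fin r} (hv : colOf hr a ψ v = some j) :
    ∃ u, ψ u = v ∧ colorOf hr a u = j := by
  by_cases h : ∃ u, ψ u = v
  · refine ⟨h.choose, h.choose_spec, ?_⟩
    rw [colOf, dif_pos h] at hv
    exact Option.some_injective _ hv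
  · rw [colOf, dif_neg h] at hv
    exact absurd hv (by simp)

lemma classF_colOf_zero (hr : 2 ≤ r) (a : Fin r → ℕ) {n b : ℕ}
    (ψ : (Fin (a ⟨0, Nat.lt_of_lt_of_le Nat.two_pos hr⟩) ⊕ (Fin (r - 1) × Fin b)) ↪ Fin n) :
    (classF (colOf hr a ψ) ⟨0, Nat.lt_of_lt_of_le Nat.two_pos hr⟩).card = a ⟨0, Nat.lt_of_lt_of_le Nat.two_pos hr⟩ := by
  classical
  have : classF (colOf hr a ψ) ⟨0, Nat.lt_of_lt_of_le Nat.two_pos hr⟩ =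
      Finset.image (fun x : Fin (a ⟨0, Nat.lt_of_lt_of_le Nat.two_pos hr⟩) => ψ (Sum.inl x)) Finset.univ := by
    ext v
    simp only [classF, Finset.mem_filter, Finset.mem_univ, true_and, Finset.mem_image]
    constructor
    · intro hv
      obtain ⟨u, hu, hcu⟩ := colOf_inv hr a ψ hv
      rcases u with x | q
      · exact ⟨x, hu⟩
      · exfalso
        have : q.1.val + 1 = 0 := congrArg Fin.val hcu
        omega
    · rintro ⟨x, rfl⟩
      rw [colOf_spec hr a ψ (Sum.inl x)]
      rfl
  have hinj : Function.Injective (fun x : Fin (a ⟨0, Nat.lt_of_lt_of_le Nat.two_pos hr⟩) => ψ (Sum.inl x)) :=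
    fun x y h => Sum.inl_injective (ψ.injective h)
  rw [this, Finset.card_image_of_injective _ hinj, Finset.card_univ, Fintype.card_fin]

lemma classF_colOf_succ (hr : 2 ≤ r) (a : Fin r → ℕ) {n b : ℕ}
    (ψ : (Fin (a ⟨0, Nat.lt_of_lt_of_le Nat.two_pos hr⟩) ⊕ (Fin (r - 1) × Fin b)) ↪ Fin n)
    (j : Fin r) (hj : j.val ≠ 0) :
    (classF (colOf hr a ψ) j).card = b := by
  classical
  have hj1 : j.val - 1 < r - 1 := by have := j.isLt; omega
  have : classF (colOf hr a ψ) j =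
      Finset.image (fun y : Fin b => ψ (Sum.inr (⟨j.val - 1, hj1⟩, y))) Finset.univ := by
    ext v
    simp only [classF, Finset.mem_filter, Finset.mem_univ, true_and, Finset.mem_image]
    constructor
    · intro hv
      obtain ⟨u, hu, hcu⟩ := colOf_inv hr a ψ hv
      rcases u with x | q
      · exfalso
        have : (0 : ℕ) = j.val := congrArg Fin.val hcu
        omega
      · have hq : q.1.val + 1 = j.val := congrArg Fin.val hcu
        refine ⟨q.2, ?_⟩
        have he : (⟨j.val - 1, hj1⟩ : Fin (r - 1)) = q.1 := Fin.ext (by simp; omega)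
        rw [he]
        exact hu
    · rintro ⟨y, rfl⟩
      rw [colOf_spec hr a ψ _]
      show some (⟨(j.val - 1) + 1, _⟩ : Fin r) = some j
      congr 1
      exact Fin.ext (by simp; omega)
  have hinj : Function.Injective (fun y : Fin b => ψ (Sum.inr (⟨j.val - 1, hj1⟩, y))) := by
    intro y1 y2 h
    have h2 := Sum.inr_injective (ψ.injective h)
    exact congrArg Prod.snd h2
  rw [this, Finset.card_image_of_injective _ hinj, Finset.card_univ, Fintype.card_fin]

end Tail

/-- let `r ≥ 2`, `a₁ ≤ … ≤ a_r`, `s₁ ≤ … ≤ s_r` positive, `a₁ < s₁`, and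
`s_i ≤ a_{i+1}` for all `i < r`. Then `ex(n, K_{a₁,…,a_r}, K_{s₁,…,s_r}) = Θ(n^{a₂+⋯+a_r})`. -/
theorem stmt17 (r : ℕ) (hr : 2 ≤ r) (a s : Fin r → ℕ)
    (hapos : ∀ i, 0 < a i) (hspos : ∀ i, 0 < s i)
    (hamono : Monotone a) (hsmono : Monotone s)
    (h0 : a ⟨0, by omega⟩ < s ⟨0, by omega⟩)
    (hconsec : ∀ i : Fin r, ∀ h : i.val + 1 < r, s i ≤ a ⟨i.val + 1, h⟩) :
    ∃ (c₁ c₂ : ℝ) (n₀ : ℕ), 0 < c₁ ∧ 0 < c₂ ∧ ∀ n ≥ n₀,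
      c₁ * (n : ℝ) ^ ((∑ i, a i) - a ⟨0, by omega⟩) ≤
        (exGen n (completeMultipartiteGraph (fun i => Fin (a i)))
          (completeMultipartiteGraph (fun i => Fin (s i))) : ℝ) ∧
      (exGen n (completeMultipartiteGraph (fun i => Fin (a i)))
          (completeMultipartiteGraph (fun i => Fin (s i))) : ℝ) ≤
        c₂ * (n : ℝ) ^ ((∑ i, a i) - a ⟨0, by omega⟩) := by
  classical
  have hr0 : 0 < r := by omega
  have hrlast : r - 1 < r := by omega
  have haA : ∀ j, a j ≤ a ⟨r - 1, hrlast⟩ := fun j =>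
    hamono (by have := j.isLt; simp [Fin.le_def]; omega)
  set A := a ⟨r - 1, hrlast⟩ with hAdef
  set C := 2 * r * (A + 1) with hCdef
  have hC4 : 4 ≤ C := by
    have h1 : 2 * 2 * (A + 1) ≤ 2 * r * (A + 1) :=
      Nat.mul_le_mul_right _ (by omega)
    omega
  set i0 : Fin r := ⟨0, hr0⟩ with hi0
  have hK1 : 1 ≤ s ⟨r - 1, hrlast⟩ := hspos _
  refine ⟨∏ j ∈ Finset.univ.erase i0, (1 / ((2 * C : ℝ) ^ (a j) * (Nat.factorial (a j)))),
    (s ⟨r - 1, hrlast⟩ : ℝ) ^ (a i0), C * C, ?_, ?_, ?_⟩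
  · apply Finset.prod_pos
    intro j hj
    positivity
  · have : (0 : ℝ) < (s ⟨r - 1, hrlast⟩ : ℝ) := by exact_mod_cast hK1
    positivity
  intro n hn
  have hFedge : ∃ u v : (Σ i : Fin r, Fin (s i)),
      (completeMultipartiteGraph (fun i => Fin (s i))).Adj u v := by
    refine ⟨⟨i0, ⟨0, hspos i0⟩⟩, ⟨⟨1, by omega⟩, ⟨0, hspos _⟩⟩, ?_⟩
    show i0 ≠ ⟨1, by omega⟩
    intro h
    have := congrArg Fin.val h
    simp [hi0] at this
  constructor
  · -- LOWER BOUND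
    -- numeric setup
    have hCpos : 0 < C := by omega
    set q := n / C with hqdef
    have hq1 : 1 ≤ q := (Nat.one_le_div_iff hCpos).mpr (by nlinarith)
    have hqC : q * C ≤ n := Nat.div_mul_le_self n C
    have hdm : C * q + n % C = n := Nat.div_add_mod n C
    have hmod : n % C < C := Nat.mod_lt _ hCpos
    have hCCq : C * 1 ≤ C * q := Nat.mul_le_mul_left _ hq1
    have hn2Cq : n ≤ 2 * (C * q) := by omega
    have ha0A : a i0 ≤ A := haA i0
    -- key estimate for b
    have hkeyZ : ((q : ℤ) + A) * ((r : ℤ) - 1) + a i0 ≤ n := by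
      have h1 : (q : ℤ) * (2 * r * (A + 1)) ≤ n := by exact_mod_cast hqC
      have h2 : ((a i0 : ℕ) : ℤ) ≤ (A : ℤ) := by exact_mod_cast ha0A
      have h3 : (1 : ℤ) ≤ (q : ℤ) := by exact_mod_cast hq1
      have h4 : (2 : ℤ) ≤ (r : ℤ) := by exact_mod_cast hr
      have h5 : (0 : ℤ) ≤ (A : ℤ) := by positivity
      nlinarith [mul_nonneg (mul_nonneg (by linarith : (0:ℤ) ≤ 2 * (q:ℤ) - 2) h5)
        (by linarith : (0:ℤ) ≤ (r : ℤ))]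
    have hkey : (q + A) * (r - 1) + a i0 ≤ n := by
      zify [show 1 ≤ r by omega]
      exact hkeyZ
    set b := (n - a i0) / (r - 1) with hbdef
    have hbA : q + A ≤ b := by
      rw [hbdef, Nat.le_div_iff_mul_le (by omega : 0 < r - 1)]
      omega
    have hbn : a i0 + (r - 1) * b ≤ n := by
      have h1 : b * (r - 1) ≤ n - a i0 := Nat.div_mul_le_self _ _
      have h3 : (r - 1) * b = b * (r - 1) := Nat.mul_comm _ _
      omega
    -- the embedding and the coloring
    obtain ⟨ψ⟩ : Nonempty ((Fin (a i0) ⊕ (Fin (r - 1) × Fin b)) ↪ Fin n) := by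
      apply Function.Embedding.nonempty_of_card_le
      simpa using hbn
    have hfree := colGraph_free hr s (colOf hr a ψ) hspos hsmono
      (by rw [classF_colOf_zero hr a ψ]; exact h0)
    have hcount := prod_choose_le_copyCount a (colOf hr a ψ)
    have hEx := le_exGen (completeMultipartiteGraph (fun i => Fin (a i)))
      (completeMultipartiteGraph (fun i => Fin (s i))) hfree
    -- compute the product of binomials
    have hprodeq : ∏ j : Fin r, Nat.choose ((classF (colOf hr a ψ) j).card) (a j) =
        ∏ j ∈ Finset.univ.erase i0, Nat.choose b (a j) := by
      rw [← Finset.mul_prod_erase Finset.univ _ (Finset.mem_univ i0)]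
      rw [classF_colOf_zero hr a ψ, Nat.choose_self, one_mul]
      apply Finset.prod_congr rfl
      intro j hj
      rw [classF_colOf_succ hr a ψ j]
      intro hjv
      exact (Finset.ne_of_mem_erase hj) (Fin.ext hjv)
    -- real-number estimates
    have hq2C : (n : ℝ) / (2 * C) ≤ (q : ℝ) := by
      rw [div_le_iff₀ (by positivity : (0:ℝ) < 2 * (C:ℝ))]
      have h1 : (n : ℕ) ≤ q * (2 * C) := by
        have : q * (2 * C) = 2 * (C * q) := by ring
        omega
      exact_mod_cast h1
    have hfac : ∀ j ∈ Finset.univ.erase i0,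
        ((n : ℝ) / (2 * C)) ^ (a j) / (Nat.factorial (a j)) ≤ (Nat.choose b (a j) : ℝ) := by
      intro j hj
      have hb1 : (q : ℝ) ≤ ((b + 1 - a j : ℕ) : ℝ) := by
        have : q ≤ b + 1 - a j := by have := haA j; omega
        exact_mod_cast this
      have h1 : ((n : ℝ) / (2 * C)) ^ (a j) ≤ ((b + 1 - a j : ℕ) : ℝ) ^ (a j) :=
        pow_le_pow_left₀ (by positivity) (le_trans hq2C hb1) _
      calc ((n : ℝ) / (2 * C)) ^ (a j) / (Nat.factorial (a j))
          ≤ ((b + 1 - a j : ℕ) : ℝ) ^ (a j) / (Nat.factorial (a j)) := by gcongr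
        _ ≤ (Nat.choose b (a j) : ℝ) := Nat.pow_le_choose (a j) b
    have hmsum : ∑ j ∈ Finset.univ.erase i0, a j = (∑ i, a i) - a i0 := by
      have := Finset.add_sum_erase Finset.univ a (Finset.mem_univ i0)
      omega
    have hprod1 : (∏ j ∈ Finset.univ.erase i0,
          (1 / ((2 * C : ℝ) ^ (a j) * (Nat.factorial (a j))))) * (n : ℝ) ^ ((∑ i, a i) - a i0)
        = ∏ j ∈ Finset.univ.erase i0,
            ((n : ℝ) / (2 * C)) ^ (a j) / (Nat.factorial (a j)) := by
      rw [← hmsum, ← Finset.prod_pow_eq_pow_sum, ← Finset.prod_mul_distrib]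
      apply Finset.prod_congr rfl
      intro j hj
      rw [div_pow]
      have hf : (0:ℝ) < (Nat.factorial (a j) : ℝ) := by
        exact_mod_cast Nat.factorial_pos (a j)
      have hc : (0:ℝ) < (2 * C : ℝ) ^ (a j) := by positivity
      field_simp
    calc (∏ j ∈ Finset.univ.erase i0, (1 / ((2 * C : ℝ) ^ (a j) * (Nat.factorial (a j))))) *
          (n : ℝ) ^ ((∑ i, a i) - a i0)
        = ∏ j ∈ Finset.univ.erase i0,
            ((n : ℝ) / (2 * C)) ^ (a j) / (Nat.factorial (a j)) := hprod1
      _ ≤ ∏ j ∈ Finset.univ.erase i0, (Nat.choose b (a j) : ℝ) :=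
          Finset.prod_le_prod (fun j hj => by positivity) hfac
      _ = ((∏ j ∈ Finset.univ.erase i0, Nat.choose b (a j) : ℕ) : ℝ) := by
          rw [Nat.cast_prod]
      _ ≤ _ := by
          have h1 : (∏ j ∈ Finset.univ.erase i0, Nat.choose b (a j)) ≤
              exGen n (completeMultipartiteGraph (fun i => Fin (a i)))
                (completeMultipartiteGraph (fun i => Fin (s i))) := by
            rw [← hprodeq]
            exact le_trans hcount hEx
          exact_mod_cast h1
  · -- UPPER BOUND
    have hup : exGen n (completeMultipartiteGraph (fun i => Fin (a i)))
        (completeMultipartiteGraph (fun i => Fin (s i))) ≤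
        s ⟨r - 1, hrlast⟩ ^ (a i0) * n ^ ((∑ i, a i) - a i0) := by
      apply exGen_le _ _ hFedge
      intro G hG
      refine le_trans (copyCount_le_injHoms _ G) ?_
      exact injHoms_card_le hr a s hr G hconsec hspos hG
    calc (exGen n (completeMultipartiteGraph (fun i => Fin (a i)))
          (completeMultipartiteGraph (fun i => Fin (s i))) : ℝ)
        ≤ ((s ⟨r - 1, hrlast⟩ ^ (a i0) * n ^ ((∑ i, a i) - a i0) : ℕ) : ℝ) := by
          exact_mod_cast hup
      _ = (s ⟨r - 1, hrlast⟩ : ℝ) ^ (a i0) * (n : ℝ) ^ ((∑ i, a i) - a i0) := by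
          push_cast
          ring
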